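/- For every s ∈ ℝ and every w ∈ ℝ, |w·g_s(w) + 𝟙(w ≤ s) − Φ(s)| ≤ 1; that is, the derivative of g_s (including both one-sided derivatives at s) is bounded in absolute value by 1. -/

import Mathlib

open MeasureTheory Real

noncomputable def Phi (s : ℝ) : ℝ :=
  ((ProbabilityTheory.gaussianReal 0 1) (Set.Iic s)).toReal

noncomputable def steinG (s w : ℝ) : ℝ :=
  Real.exp (w ^ 2 / 2) *
    ∫ u in Set.Iic w, ((if u ≤ s then (1 : ℝ) else 0) - Phi s) * Real.exp (-u ^ 2 / 2)

noncomputable def gint (w : ℝ) : ℝ := ∫ u in Set.Iic w, Real.exp (-u ^ 2 / 2)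

lemma integrable_g : Integrable (fun u : ℝ => Real.exp (-u ^ 2 / 2)) := by
  have h := integrable_exp_neg_mul_sq (by norm_num : (0:ℝ) < 1/2)
  convert h using 2 with x
  ring_nf

lemma integral_g_total : ∫ u : ℝ, Real.exp (-u ^ 2 / 2) = Real.sqrt (2 * π) := by
  have h := integral_gaussian (1/2 : ℝ)
  rw [show π / (1/2 : ℝ) = 2 * π by ring] at h
  rw [← h]
  congr 1 with x
  ring_nf

lemma gint_nonneg (w : ℝ) : 0 ≤ gint w := by
  refine integral_nonneg fun u => (Real.exp_pos _).le

lemma gint_mono : Monotone gint := fun a b hab => by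
  unfold gint
  refine setIntegral_mono_set integrable_g.integrableOn
    (ae_of_all _ fun u => (Real.exp_pos _).le) (ae_of_all _ fun u hu => le_trans hu hab)

lemma gint_add_tail (w : ℝ) :
    gint w + ∫ u in Set.Ioi w, Real.exp (-u ^ 2 / 2) = Real.sqrt (2 * π) := by
  unfold gint
  rw [← integral_g_total, ← setIntegral_union (Set.Iic_disjoint_Ioi le_rfl) measurableSet_Ioi
    integrable_g.integrableOn integrable_g.integrableOn, Set.Iic_union_Ioi, setIntegral_univ]

lemma tail_nonneg (w : ℝ) : 0 ≤ ∫ u in Set.Ioi w, Real.exp (-u ^ 2 / 2) :=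
  integral_nonneg fun _ => (Real.exp_pos _).le

lemma gint_le (w : ℝ) : gint w ≤ Real.sqrt (2 * π) := by
  have := gint_add_tail w
  have h2 := tail_nonneg w
  linarith

lemma deriv_aux (u : ℝ) : HasDerivAt (fun x : ℝ => -Real.exp (-x ^ 2 / 2))
    (u * Real.exp (-u ^ 2 / 2)) u := by
  have h : HasDerivAt (fun x : ℝ => -x ^ 2 / 2) (-u) u := by
    have h2 := ((hasDerivAt_pow 2 u).neg).div_const 2
    convert h2 using 1
    · rfl
    · rfl
    · rfl
    · simp
      ring
  have h3 := (h.exp).neg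
  convert h3 using 1
  · rfl
  · rfl
  · rfl
  · ring

lemma integrable_mul_g : Integrable (fun u : ℝ => u * Real.exp (-u ^ 2 / 2)) := by
  have h := integrable_mul_exp_neg_mul_sq (b := (1/2:ℝ)) (by norm_num)
  convert h using 2 with x
  ring_nf

lemma integrable_neg_mul_g : Integrable (fun u : ℝ => -u * Real.exp (-u ^ 2 / 2)) :=
  integrable_mul_g.neg.congr (ae_of_all _ fun x => by simp [neg_mul])

lemma exp_tendsto_top : Filter.Tendsto (fun x : ℝ => Real.exp (-x ^ 2 / 2))
    Filter.atTop (nhds 0) := by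
  have h1 : Filter.Tendsto (fun x : ℝ => -x ^ 2 / 2) Filter.atTop Filter.atBot := by
    apply Filter.Tendsto.atBot_div_const (by norm_num)
    exact Filter.tendsto_neg_atBot_iff.mpr (Filter.tendsto_pow_atTop (by norm_num))
  exact Real.tendsto_exp_atBot.comp h1

lemma exp_tendsto_bot : Filter.Tendsto (fun x : ℝ => Real.exp (-x ^ 2 / 2))
    Filter.atBot (nhds 0) := by
  have h := exp_tendsto_top.comp Filter.tendsto_neg_atBot_atTop
  have e : ((fun x : ℝ => Real.exp (-x ^ 2 / 2)) ∘ Neg.neg) = fun x : ℝ => Real.exp (-x ^ 2 / 2) := by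
    ext x; simp [Function.comp, neg_sq]
  rwa [e] at h

lemma mills_upper {w : ℝ} (hw : 0 < w) :
    (∫ u in Set.Ioi w, Real.exp (-u ^ 2 / 2)) * w ≤ Real.exp (-w ^ 2 / 2) := by
  have key : ∫ u in Set.Ioi w, u * Real.exp (-u ^ 2 / 2) = Real.exp (-w ^ 2 / 2) := by
    have h := integral_Ioi_of_hasDerivAt_of_tendsto (f := fun x : ℝ => -Real.exp (-x ^ 2 / 2))
      (f' := fun u => u * Real.exp (-u ^ 2 / 2)) (a := w) (m := 0)
      ((Real.continuous_exp.comp (by continuity)).neg.continuousWithinAt)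
      (fun x _ => deriv_aux x) integrable_mul_g.integrableOn
      (by simpa using exp_tendsto_top.neg)
    rw [h]; simp
  calc (∫ u in Set.Ioi w, Real.exp (-u ^ 2 / 2)) * w
      = ∫ u in Set.Ioi w, w * Real.exp (-u ^ 2 / 2) := by rw [integral_const_mul]; ring
    _ ≤ ∫ u in Set.Ioi w, u * Real.exp (-u ^ 2 / 2) := by
        refine setIntegral_mono_on (integrable_g.const_mul w).integrableOn
          integrable_mul_g.integrableOn measurableSet_Ioi fun u hu => ?_
        have h2 : w ≤ u := le_of_lt hu
        nlinarith [Real.exp_pos (-u ^ 2 / 2)]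
    _ = Real.exp (-w ^ 2 / 2) := key

lemma mills_lower {w : ℝ} (hw : w < 0) :
    gint w * (-w) ≤ Real.exp (-w ^ 2 / 2) := by
  have key : ∫ u in Set.Iic w, (-u) * Real.exp (-u ^ 2 / 2) = Real.exp (-w ^ 2 / 2) := by
    have h := integral_Iic_of_hasDerivAt_of_tendsto (f := fun x : ℝ => Real.exp (-x ^ 2 / 2))
      (f' := fun u => (-u) * Real.exp (-u ^ 2 / 2)) (a := w) (m := 0)
      ((Real.continuous_exp.comp (by continuity)).continuousWithinAt)
      (fun x _ => by simpa [neg_mul, Pi.neg_def] using (deriv_aux x).neg)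
      integrable_neg_mul_g.integrableOn
      exp_tendsto_bot
    rw [h]; simp
  calc gint w * (-w) = ∫ u in Set.Iic w, (-w) * Real.exp (-u ^ 2 / 2) := by
        unfold gint; rw [integral_const_mul]; ring
    _ ≤ ∫ u in Set.Iic w, (-u) * Real.exp (-u ^ 2 / 2) := by
        refine setIntegral_mono_on (integrable_g.const_mul (-w)).integrableOn
          integrable_neg_mul_g.integrableOn measurableSet_Iic fun u hu => ?_
        have h2 : u ≤ w := hu
        nlinarith [Real.exp_pos (-u ^ 2 / 2)]
    _ = Real.exp (-w ^ 2 / 2) := key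

lemma sqrt2pi_pos : 0 < Real.sqrt (2 * π) := Real.sqrt_pos.mpr (by positivity)

lemma Phi_eq (s : ℝ) : Phi s * Real.sqrt (2 * π) = gint s := by
  unfold Phi
  rw [ProbabilityTheory.gaussianReal_apply_eq_integral 0 (by norm_num) (Set.Iic s),
    ENNReal.toReal_ofReal
      (integral_nonneg fun x => ProbabilityTheory.gaussianPDFReal_nonneg _ _ _)]
  unfold gint
  rw [← integral_mul_const]
  refine setIntegral_congr_fun measurableSet_Iic fun u _ => ?_
  unfold ProbabilityTheory.gaussianPDFReal
  push_cast
  rw [mul_comm, ← mul_assoc, mul_one, mul_one, sub_zero,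
    mul_inv_cancel₀ (ne_of_gt sqrt2pi_pos), one_mul]

lemma integrable_f (s : ℝ) :
    Integrable (fun u : ℝ => ((if u ≤ s then (1:ℝ) else 0) - Phi s) * Real.exp (-u ^ 2 / 2)) := by
  have h1 : Integrable (fun u : ℝ => (if u ≤ s then (1:ℝ) else 0) * Real.exp (-u ^ 2 / 2)) := by
    refine (integrable_g.indicator measurableSet_Iic (s := Set.Iic s)).congr
      (ae_of_all _ fun x => ?_)
    by_cases hx : x ≤ s <;> simp [Set.indicator, hx, Set.mem_Iic]
  exact (h1.sub (integrable_g.const_mul (Phi s))).congr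
    (ae_of_all _ fun x => by simp only [Pi.sub_apply]; ring)

lemma steinG_eq_of_le {s w : ℝ} (h : w ≤ s) :
    steinG s w = Real.exp (w ^ 2 / 2) * ((1 - Phi s) * gint w) := by
  unfold steinG gint
  congr 1
  rw [← integral_const_mul]
  exact setIntegral_congr_fun measurableSet_Iic fun u hu => by
    rw [if_pos (le_trans hu h)]

lemma Ioc_int {s w : ℝ} (h : s ≤ w) :
    ∫ u in Set.Ioc s w, Real.exp (-u ^ 2 / 2) = gint w - gint s := by
  have h2 : (∫ u in Set.Iic s ∪ Set.Ioc s w, Real.exp (-u ^ 2 / 2))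
      = (∫ u in Set.Iic s, Real.exp (-u ^ 2 / 2)) + ∫ u in Set.Ioc s w, Real.exp (-u ^ 2 / 2) :=
    setIntegral_union (Set.Iic_disjoint_Ioc le_rfl) measurableSet_Ioc
      integrable_g.integrableOn integrable_g.integrableOn
  rw [Set.Iic_union_Ioc_eq_Iic h] at h2
  unfold gint
  linarith [h2]

lemma steinG_eq_of_gt {s w : ℝ} (h : s < w) :
    steinG s w = Real.exp (w ^ 2 / 2) * (gint s - Phi s * gint w) := by
  unfold steinG
  congr 1
  have hint := integrable_f s
  rw [← Set.Iic_union_Ioc_eq_Iic h.le,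
    setIntegral_union (Set.Iic_disjoint_Ioc le_rfl) measurableSet_Ioc
      hint.integrableOn hint.integrableOn]
  have h1 : ∫ u in Set.Iic s, ((if u ≤ s then (1:ℝ) else 0) - Phi s) * Real.exp (-u ^ 2 / 2)
      = (1 - Phi s) * gint s := by
    unfold gint
    rw [← integral_const_mul]
    exact setIntegral_congr_fun measurableSet_Iic fun u hu => by
      rw [if_pos (Set.mem_Iic.mp hu)]
  have h2 : ∫ u in Set.Ioc s w, ((if u ≤ s then (1:ℝ) else 0) - Phi s) * Real.exp (-u ^ 2 / 2)
      = -Phi s * (gint w - gint s) := by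
    rw [← Ioc_int h.le, ← integral_const_mul]
    exact setIntegral_congr_fun measurableSet_Ioc fun u hu => by
      rw [if_neg (not_le.mpr hu.1)]; ring_nf
  rw [h1, h2]
  ring

set_option maxHeartbeats 1000000 in
/-- The derivative of the Stein solution (including both one-sided derivatives at `s`)
is bounded in absolute value by `1`. -/
theorem abs_steinG_deriv_le_one (s w : ℝ) :
    |w * steinG s w + (if w ≤ s then (1 : ℝ) else 0) - Phi s| ≤ 1 := by
  have hS : 0 < Real.sqrt (2 * π) := sqrt2pi_pos
  have e1 : Phi s * Real.sqrt (2 * π) = gint s := Phi_eq s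
  have hgw0 : 0 ≤ gint w := gint_nonneg w
  have hgs0 : 0 ≤ gint s := gint_nonneg s
  have hgwS : gint w ≤ Real.sqrt (2 * π) := gint_le w
  have hgsS : gint s ≤ Real.sqrt (2 * π) := gint_le s
  have hc0 : 0 ≤ Phi s := ENNReal.toReal_nonneg
  have hc1 : Phi s ≤ 1 := by nlinarith
  have he : 0 < Real.exp (w ^ 2 / 2) := Real.exp_pos _
  have hee : Real.exp (w ^ 2 / 2) * Real.exp (-w ^ 2 / 2) = 1 := by
    rw [← Real.exp_add, show w ^ 2 / 2 + -w ^ 2 / 2 = 0 by ring, Real.exp_zero]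
  have hTi : (∫ u in Set.Ioi w, Real.exp (-u ^ 2 / 2)) = Real.sqrt (2 * π) - gint w := by
    linarith [gint_add_tail w]
  rw [abs_le]
  rcases le_or_gt w s with h | h
  · rw [steinG_eq_of_le h, if_pos h]
    have hgws : gint w ≤ gint s := gint_mono h
    have e2 : Phi s * (w * Real.exp (w ^ 2 / 2) * gint w) * Real.sqrt (2 * π)
        = gint s * (w * Real.exp (w ^ 2 / 2) * gint w) := by
      rw [show Phi s * (w * Real.exp (w ^ 2 / 2) * gint w) * Real.sqrt (2 * π)
        = (Phi s * Real.sqrt (2 * π)) * (w * Real.exp (w ^ 2 / 2) * gint w) by ring, e1]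
    have hA : -1 ≤ w * Real.exp (w ^ 2 / 2) * gint w := by
      rcases le_or_gt 0 w with hw | hw
      · linarith [mul_nonneg (mul_nonneg hw he.le) hgw0]
      · linarith [mul_le_mul_of_nonneg_left (mills_lower hw) he.le]
    constructor
    · linarith [mul_nonneg (sub_nonneg.mpr hc1)
        (by linarith : (0:ℝ) ≤ 1 + w * Real.exp (w ^ 2 / 2) * gint w)]
    · have key : w * Real.exp (w ^ 2 / 2) * gint w * (Real.sqrt (2 * π) - gint s)
          ≤ gint s := by
        rcases le_or_gt w 0 with hw | hw
        · linarith [mul_nonneg (mul_nonneg (mul_nonneg (neg_nonneg.mpr hw) he.le) hgw0)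
            (by linarith : (0:ℝ) ≤ Real.sqrt (2 * π) - gint s)]
        · have hmu := mills_upper hw
          rw [hTi] at hmu
          have h3 : w * Real.exp (w ^ 2 / 2) * (Real.sqrt (2 * π) - gint w) ≤ 1 := by
            linarith [mul_le_mul_of_nonneg_left hmu he.le]
          have h4 : 0 ≤ w * Real.exp (w ^ 2 / 2) * gint w :=
            mul_nonneg (mul_nonneg hw.le he.le) hgw0
          have h5 := mul_le_mul_of_nonneg_left
            (show Real.sqrt (2 * π) - gint s ≤ Real.sqrt (2 * π) - gint w by linarith) h4
          have h6 := mul_le_mul_of_nonneg_right h3 hgw0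
          linarith [h5, h6]
      have keyS : (w * (Real.exp (w ^ 2 / 2) * ((1 - Phi s) * gint w)) + 1 - Phi s)
          * Real.sqrt (2 * π) ≤ 1 * Real.sqrt (2 * π) := by
        linarith [key, e1, e2]
      exact (mul_le_mul_iff_of_pos_right hS).mp keyS
  · rw [steinG_eq_of_gt h, if_neg (not_le.mpr h)]
    have hgsw : gint s ≤ gint w := gint_mono h.le
    have hT0 : (0:ℝ) ≤ Real.sqrt (2 * π) - gint w := by linarith
    have e5 : w * Real.exp (w ^ 2 / 2) * (Phi s * Real.sqrt (2 * π))
        = w * Real.exp (w ^ 2 / 2) * gint s := by rw [e1]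
    have e6 : Phi s * (w * Real.exp (w ^ 2 / 2) * gint w) * Real.sqrt (2 * π)
        = gint s * (w * Real.exp (w ^ 2 / 2) * gint w) := by
      rw [show Phi s * (w * Real.exp (w ^ 2 / 2) * gint w) * Real.sqrt (2 * π)
        = (Phi s * Real.sqrt (2 * π)) * (w * Real.exp (w ^ 2 / 2) * gint w) by ring, e1]
    constructor
    · rcases le_or_gt 0 w with hw | hw
      · linarith [mul_nonneg hc0 (mul_nonneg (mul_nonneg hw he.le) hT0), e5, hc1]
      · have hA : -1 ≤ w * Real.exp (w ^ 2 / 2) * gint w := by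
          linarith [mul_le_mul_of_nonneg_left (mills_lower hw) he.le]
        have s1 : w * Real.exp (w ^ 2 / 2) * gint w ≤ w * Real.exp (w ^ 2 / 2) * gint s := by
          linarith [mul_nonneg (mul_nonneg (neg_nonneg.mpr hw.le) he.le)
            (sub_nonneg.mpr hgsw)]
        have s3 := mul_le_mul_of_nonneg_right s1 hT0
        have s2 := mul_le_mul_of_nonneg_right hA hT0
        have keyS : (-1 : ℝ) * Real.sqrt (2 * π)
            ≤ (w * (Real.exp (w ^ 2 / 2) * (gint s - Phi s * gint w)) + 0 - Phi s)
              * Real.sqrt (2 * π) := by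
          linarith [s2, s3, e1, e6, hgsw]
        exact (mul_le_mul_iff_of_pos_right hS).mp keyS
    · rcases le_or_gt w 0 with hw | hw
      · linarith [mul_nonneg hc0 (mul_nonneg (mul_nonneg (neg_nonneg.mpr hw) he.le) hT0),
          e5, hc0]
      · have hmu := mills_upper hw
        rw [hTi] at hmu
        have h3 : w * Real.exp (w ^ 2 / 2) * (Real.sqrt (2 * π) - gint w) ≤ 1 := by
          linarith [mul_le_mul_of_nonneg_left hmu he.le]
        linarith [mul_le_mul_of_nonneg_left h3 hc0, e5, hc0]
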